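/- Let L₁, …, L_r ⊆ S^k be path-connected, pairwise at distance at least δ > 0 from each other, and suppose the cone M_i over each L_i is C-LNE. Then the cone M over L = L₁ ∪ … ∪ L_r is max{C, 4/δ}-LNE: for x ∈ M_i∖{0}, y ∈ M_j∖{0} with i ≠ j one has d_M(x,y) = ‖x‖+‖y‖ and ‖x−y‖ ≥ (δ/4)(‖x‖+‖y‖). -/

import Mathlib

open Set Metric Filter Topology Pointwise

noncomputable def innerDist {E : Type*} [NormedAddCommGroup E] (Z : Set E) (x y : E) : ENNReal :=
  ⨅ (γ : ℝ → E) (_ : ContinuousOn γ (Set.Icc 0 1)) (_ : Set.MapsTo γ (Set.Icc 0 1) Z)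
    (_ : γ 0 = x) (_ : γ 1 = y), eVariationOn γ (Set.Icc 0 1)

def IsLNE {E : Type*} [NormedAddCommGroup E] (Z : Set E) (C : ℝ) : Prop :=
  ∀ x ∈ Z, ∀ y ∈ Z, innerDist Z x y ≤ ENNReal.ofReal (C * ‖x - y‖)

/-- The cone over a subset `L` of the unit sphere. -/
def coneOver {E : Type*} [NormedAddCommGroup E] [NormedSpace ℝ E] (L : Set E) : Set E :=
  {p | ∃ x ∈ L, ∃ t : ℝ, 0 ≤ t ∧ p = t • x}

section Helpers

variable {E : Type*} [NormedAddCommGroup E]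

lemma innerDist_le {Z : Set E} {x y : E} {γ : ℝ → E}
    (hc : ContinuousOn γ (Icc 0 1)) (hm : MapsTo γ (Icc 0 1) Z)
    (h0 : γ 0 = x) (h1 : γ 1 = y) :
    innerDist Z x y ≤ eVariationOn γ (Icc 0 1) :=
  iInf_le_of_le γ (iInf_le_of_le hc (iInf_le_of_le hm (iInf_le_of_le h0 (iInf_le _ h1))))

lemma le_innerDist {Z : Set E} {x y : E} {D : ENNReal}
    (h : ∀ γ : ℝ → E, ContinuousOn γ (Icc 0 1) → MapsTo γ (Icc 0 1) Z →
      γ 0 = x → γ 1 = y → D ≤ eVariationOn γ (Icc 0 1)) :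
    D ≤ innerDist Z x y :=
  le_iInf fun γ => le_iInf fun hc => le_iInf fun hm => le_iInf fun h0 => le_iInf fun h1 =>
    h γ hc hm h0 h1

lemma innerDist_mono {Z W : Set E} (h : Z ⊆ W) (x y : E) :
    innerDist W x y ≤ innerDist Z x y :=
  le_iInf fun γ => le_iInf fun hc => le_iInf fun hm => le_iInf fun h0 => le_iInf fun h1 =>
    innerDist_le hc (hm.mono_right h) h0 h1

lemma key_ineq {F : Type*} [NormedAddCommGroup F] [InnerProductSpace ℝ F]
    {a b : F} (ha : ‖a‖ = 1) (hb : ‖b‖ = 1)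
    {δ t s : ℝ} (hδ : 0 < δ) (hd : δ ≤ ‖a - b‖) (ht : 0 ≤ t) (hs : 0 ≤ s) :
    δ / 4 * (t + s) ≤ ‖t • a - s • b‖ := by
  have hab2 : ‖a - b‖ ≤ 2 := by
    calc ‖a - b‖ ≤ ‖a‖ + ‖b‖ := norm_sub_le _ _
      _ = 2 := by rw [ha, hb]; norm_num
  have e0 : ‖a - b‖ ^ 2 = 2 - 2 * inner (𝕜 := ℝ) a b := by
    rw [norm_sub_sq_real, ha, hb]; ring
  have e1 : ‖t • a - s • b‖ ^ 2 = (t - s) ^ 2 + t * s * ‖a - b‖ ^ 2 := by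
    rw [norm_sub_sq_real, norm_smul, norm_smul, real_inner_smul_left, real_inner_smul_right,
      ha, hb, e0, Real.norm_eq_abs, Real.norm_eq_abs, abs_of_nonneg ht, abs_of_nonneg hs]
    ring
  have hN : (0:ℝ) ≤ ‖t • a - s • b‖ := norm_nonneg _
  have hL : (0:ℝ) ≤ δ / 4 * (t + s) := by positivity
  have h1 : δ ^ 2 ≤ ‖a - b‖ ^ 2 := by nlinarith
  have h2 : δ ^ 2 ≤ 16 := by nlinarith
  have hsq : (δ / 4 * (t + s)) ^ 2 ≤ ‖t • a - s • b‖ ^ 2 := by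
    nlinarith [mul_nonneg (sq_nonneg (t - s)) (by linarith : (0:ℝ) ≤ 16 - δ ^ 2),
      mul_nonneg (mul_nonneg ht hs)
        (by nlinarith [sq_nonneg δ] : (0:ℝ) ≤ ‖a - b‖ ^ 2 - δ ^ 2 / 4)]
  calc δ / 4 * (t + s) = Real.sqrt ((δ / 4 * (t + s)) ^ 2) := (Real.sqrt_sq hL).symm
    _ ≤ Real.sqrt (‖t • a - s • b‖ ^ 2) := Real.sqrt_le_sqrt hsq
    _ = ‖t • a - s • b‖ := Real.sqrt_sq hN

variable [NormedSpace ℝ E]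

lemma coneOver_mono {L L' : Set E} (h : L ⊆ L') : coneOver L ⊆ coneOver L' := by
  rintro p ⟨a, ha, t, ht, rfl⟩; exact ⟨a, h ha, t, ht, rfl⟩

lemma smul_mem_coneOver {L : Set E} {p : E} (hp : p ∈ coneOver L) {c : ℝ} (hc : 0 ≤ c) :
    c • p ∈ coneOver L := by
  obtain ⟨a, ha, t, ht, rfl⟩ := hp
  exact ⟨a, ha, c * t, mul_nonneg hc ht, (smul_smul c t a).symm ▸ rfl⟩

lemma evar_smul_le (x : E) {g : ℝ → ℝ} {a b : ℝ}
    (hab : a ≤ b) (hg : MonotoneOn g (Icc a b)) :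
    eVariationOn (fun t => g t • x) (Icc a b) ≤ ENNReal.ofReal ((g b - g a) * ‖x‖) := by
  have hf : LipschitzWith ‖x‖₊ (fun u : ℝ => u • x) := by
    apply LipschitzWith.of_dist_le_mul
    intro u v
    rw [dist_eq_norm, dist_eq_norm, ← sub_smul, norm_smul, Real.norm_eq_abs, mul_comm]
    simp
  have hcomp := (hf.lipschitzOnWith (s := univ)).comp_eVariationOn_le
      (g := g) (s := Icc a b) (mapsTo_univ _ _)
  have hgv : eVariationOn g (Icc a b) ≤ ENNReal.ofReal (g b - g a) := by
    have := hg.eVariationOn_le (left_mem_Icc.mpr hab) (right_mem_Icc.mpr hab)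
    simpa [inter_self] using this
  calc eVariationOn (fun t => g t • x) (Icc a b)
      = eVariationOn ((fun u : ℝ => u • x) ∘ g) (Icc a b) := rfl
    _ ≤ (‖x‖₊ : ENNReal) * eVariationOn g (Icc a b) := hcomp
    _ ≤ (‖x‖₊ : ENNReal) * ENNReal.ofReal (g b - g a) := mul_le_mul_right hgv _
    _ = ENNReal.ofReal ((g b - g a) * ‖x‖) := by
        rw [← enorm_eq_nnnorm, ← ofReal_norm, ← ENNReal.ofReal_mul (norm_nonneg x), mul_comm]

lemma innerDist_through_zero {Z : Set E} {x y : E}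
    (hx : ∀ c : ℝ, 0 ≤ c → c • x ∈ Z) (hy : ∀ c : ℝ, 0 ≤ c → c • y ∈ Z) :
    innerDist Z x y ≤ ENNReal.ofReal (‖x‖ + ‖y‖) := by
  classical
  set γ : ℝ → E := fun t => if t ≤ 1/2 then (1 - 2*t) • x else (2*t - 1) • y with hγ
  have hcont : Continuous γ := by
    apply Continuous.if_le
    · exact (continuous_const.sub (continuous_const.mul continuous_id)).smul continuous_const
    · exact ((continuous_const.mul continuous_id).sub continuous_const).smul continuous_const
    · exact continuous_id
    · exact continuous_const
    · intro t ht; rw [ht]; norm_num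
  have hmap : MapsTo γ (Icc 0 1) Z := by
    intro t ht
    by_cases h : t ≤ 1/2
    · simp only [γ, if_pos h]; exact hx _ (by linarith [ht.1])
    · simp only [γ, if_neg h]; push_neg at h; exact hy _ (by linarith)
  have h0 : γ 0 = x := by simp [γ]
  have h1 : γ 1 = y := by norm_num [γ]
  have hmono : ∀ s : Set ℝ, MonotoneOn (fun t : ℝ => 2*t - 1) s := by
    intro s u hu v hv huv; simp only; linarith
  have v1 : eVariationOn γ (Icc 0 (1/2)) ≤ ENNReal.ofReal ‖x‖ := by
    have heq : EqOn γ (fun t : ℝ => (2*t - 1) • (-x)) (Icc 0 (1/2)) := by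
      intro t ht
      have h' : t ≤ 1/2 := ht.2
      simp only [γ, if_pos h']
      have : (1 - 2*t) = -(2*t - 1) := by ring
      rw [this, neg_smul, ← smul_neg]
    rw [eVariationOn.eq_of_eqOn heq]
    have := evar_smul_le (-x) (g := fun t : ℝ => 2*t - 1) (by norm_num : (0:ℝ) ≤ 1/2)
      (hmono _)
    simpa using this
  have v2 : eVariationOn γ (Icc (1/2) 1) ≤ ENNReal.ofReal ‖y‖ := by
    have heq : EqOn γ (fun t : ℝ => (2*t - 1) • y) (Icc (1/2) 1) := by
      intro t ht
      by_cases h' : t ≤ 1/2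
      · have ht2 : t = 1/2 := le_antisymm h' ht.1
        simp only [γ, if_pos h', ht2]; norm_num
      · simp only [γ, if_neg h']
    rw [eVariationOn.eq_of_eqOn heq]
    have := evar_smul_le y (g := fun t : ℝ => 2*t - 1) (by norm_num : (1:ℝ)/2 ≤ 1) (hmono _)
    exact le_trans this (by norm_num)
  have hsplit := eVariationOn.Icc_add_Icc γ (s := (univ : Set ℝ))
    (by norm_num : (0:ℝ) ≤ 1/2) (by norm_num : (1:ℝ)/2 ≤ 1) (mem_univ _)
  simp only [univ_inter] at hsplit
  calc innerDist Z x y ≤ eVariationOn γ (Icc 0 1) := innerDist_le hcont.continuousOn hmap h0 h1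
    _ = eVariationOn γ (Icc 0 (1/2)) + eVariationOn γ (Icc (1/2) 1) := hsplit.symm
    _ ≤ ENNReal.ofReal ‖x‖ + ENNReal.ofReal ‖y‖ := add_le_add v1 v2
    _ = ENNReal.ofReal (‖x‖ + ‖y‖) := (ENNReal.ofReal_add (norm_nonneg _) (norm_nonneg _)).symm

end Helpers

theorem stmt_4 {k r : ℕ} (L : Fin r → Set (EuclideanSpace ℝ (Fin (k + 1))))
    (hconn : ∀ i, IsPathConnected (L i))
    (hsub : ∀ i, L i ⊆ Metric.sphere (0 : EuclideanSpace ℝ (Fin (k + 1))) 1)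
    (δ C : ℝ) (hδ : 0 < δ) (hC : 1 ≤ C)
    (hsep : ∀ i j, i ≠ j → ∀ x ∈ L i, ∀ y ∈ L j, δ ≤ ‖x - y‖)
    (hM : ∀ i, IsLNE (coneOver (L i)) C) :
    IsLNE (coneOver (⋃ i, L i)) (max C (4 / δ)) ∧
    ∀ i j, i ≠ j → ∀ x ∈ coneOver (L i) \ {0}, ∀ y ∈ coneOver (L j) \ {0},
      innerDist (coneOver (⋃ i, L i)) x y = ENNReal.ofReal (‖x‖ + ‖y‖) ∧
      δ / 4 * (‖x‖ + ‖y‖) ≤ ‖x - y‖ := by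
  set M := coneOver (⋃ i, L i) with hMdef
  have hnorm1 : ∀ i, ∀ a ∈ L i, ‖a‖ = 1 := fun i a ha =>
    mem_sphere_zero_iff_norm.mp (hsub i ha)
  have hrep : ∀ i, ∀ p ∈ coneOver (L i), p ≠ 0 →
      ∃ a ∈ L i, ‖a‖ = 1 ∧ p = ‖p‖ • a := by
    rintro i p ⟨a, haL, t, ht, rfl⟩ hne
    have ha1 : ‖a‖ = 1 := hnorm1 i a haL
    have hn : ‖t • a‖ = t := by
      rw [norm_smul, ha1, Real.norm_eq_abs, abs_of_nonneg ht, mul_one]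
    exact ⟨a, haL, ha1, by rw [hn]⟩
  have hsep' : ∀ i j, i ≠ j → ∀ p, p ∈ coneOver (L i) → p ≠ 0 →
      ∀ q, q ∈ coneOver (L j) → q ≠ 0 → δ / 4 * (‖p‖ + ‖q‖) ≤ ‖p - q‖ := by
    intro i j hij p hp hp0 q hq hq0
    obtain ⟨a, haL, ha1, hpe⟩ := hrep i p hp hp0
    obtain ⟨b, hbL, hb1, hqe⟩ := hrep j q hq hq0
    have := key_ineq ha1 hb1 hδ (hsep i j hij a haL b hbL) (norm_nonneg p) (norm_nonneg q)
    rwa [← hpe, ← hqe] at this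
  have hmemM : ∀ p ∈ M, ∃ i, p ∈ coneOver (L i) := by
    rintro p ⟨a, haU, t, ht, rfl⟩
    obtain ⟨i, hai⟩ := mem_iUnion.mp haU
    exact ⟨i, a, hai, t, ht, rfl⟩
  have hsubM : ∀ i, coneOver (L i) ⊆ M := fun i => coneOver_mono (subset_iUnion L i)
  -- every admissible path between points of different cones hits 0
  have hits : ∀ i j, i ≠ j → ∀ γ : ℝ → EuclideanSpace ℝ (Fin (k + 1)),
      ContinuousOn γ (Icc 0 1) → MapsTo γ (Icc 0 1) M →
      γ 0 ∈ coneOver (L i) → γ 0 ≠ 0 → γ 1 ∈ coneOver (L j) → γ 1 ≠ 0 →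
      ∃ c ∈ Icc (0:ℝ) 1, γ c = 0 := by
    intro i j hij γ hc hm h0i h00 h1j h10
    by_contra hno
    push_neg at hno
    haveI : PreconnectedSpace (Icc (0:ℝ) 1) := Subtype.preconnectedSpace isPreconnected_Icc
    have hGc : Continuous ((Icc (0:ℝ) 1).restrict γ) := hc.restrict
    have hloc : ∀ l : Fin r, ∀ t : Icc (0:ℝ) 1, γ ↑t ∈ coneOver (L l) →
        ∀ t' : Icc (0:ℝ) 1, ‖γ ↑t' - γ ↑t‖ < δ / 4 * ‖γ ↑t‖ → γ ↑t' ∈ coneOver (L l) := by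
      intro l t htl t' hclose
      obtain ⟨m, hm'⟩ := hmemM _ (hm t'.2)
      by_cases hml : m = l
      · exact hml ▸ hm'
      · exfalso
        have hs := hsep' m l hml _ hm' (hno t' t'.2) _ htl (hno t t.2)
        have h2 : δ / 4 * ‖γ ↑t‖ ≤ ‖γ ↑t' - γ ↑t‖ :=
          le_trans (by nlinarith [norm_nonneg (γ ↑t')]) hs
        linarith
    set u : Set (Icc (0:ℝ) 1) := {t | γ ↑t ∈ coneOver (L i)} with hu
    set v : Set (Icc (0:ℝ) 1) := {t | ∃ l, l ≠ i ∧ γ ↑t ∈ coneOver (L l)} with hv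
    have hopen : ∀ (l : Fin r) (t : Icc (0:ℝ) 1), γ ↑t ∈ coneOver (L l) →
        {t' : Icc (0:ℝ) 1 | γ ↑t' ∈ coneOver (L l)} ∈ nhds t := by
      intro l t htl
      have hr : 0 < δ / 4 * ‖γ ↑t‖ := by
        have := norm_pos_iff.mpr (hno t t.2); positivity
      have hball : (Icc (0:ℝ) 1).restrict γ ⁻¹' (Metric.ball (γ ↑t) (δ / 4 * ‖γ ↑t‖)) ∈ nhds t :=
        hGc.continuousAt.preimage_mem_nhds (Metric.ball_mem_nhds _ hr)
      filter_upwards [hball] with t' ht'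
      refine hloc l t htl t' ?_
      simpa [Set.restrict, dist_eq_norm] using ht'
    have hu_open : IsOpen u := by
      rw [isOpen_iff_mem_nhds]
      intro t ht
      exact hopen i t ht
    have hv_open : IsOpen v := by
      rw [isOpen_iff_mem_nhds]
      intro t ht
      obtain ⟨l, hli, htl⟩ := ht
      filter_upwards [hopen l t htl] with t' ht'
      exact ⟨l, hli, ht'⟩
    have hcover : (univ : Set (Icc (0:ℝ) 1)) ⊆ u ∪ v := by
      intro z _
      obtain ⟨l, hl⟩ := hmemM _ (hm z.2)
      by_cases hli : l = i
      · exact Or.inl (by rwa [hli] at hl)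
      · exact Or.inr ⟨l, hli, hl⟩
    have hne_u : (univ ∩ u).Nonempty :=
      ⟨⟨0, by norm_num⟩, mem_univ _, h0i⟩
    have hne_v : (univ ∩ v).Nonempty :=
      ⟨⟨1, by norm_num⟩, mem_univ _, ⟨j, Ne.symm hij, h1j⟩⟩
    obtain ⟨t, -, htu, l, hli, htl⟩ :=
      isPreconnected_univ u v hu_open hv_open hcover hne_u hne_v
    have hs := hsep' l i hli _ htl (hno t t.2) _ htu (hno t t.2)
    have hpos := norm_pos_iff.mpr (hno t t.2)
    simp only [sub_self, norm_zero] at hs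
    nlinarith
  -- lower bound
  have hlower : ∀ i j, i ≠ j → ∀ x, x ∈ coneOver (L i) → x ≠ 0 →
      ∀ y, y ∈ coneOver (L j) → y ≠ 0 →
      ENNReal.ofReal (‖x‖ + ‖y‖) ≤ innerDist M x y := by
    intro i j hij x hx hx0 y hy hy0
    apply le_innerDist
    intro γ hc hm h0 h1
    obtain ⟨c, hcmem, hc0⟩ := hits i j hij γ hc hm (h0 ▸ hx) (h0 ▸ hx0) (h1 ▸ hy) (h1 ▸ hy0)
    have hsplit := eVariationOn.Icc_add_Icc γ (s := (univ : Set ℝ)) hcmem.1 hcmem.2 (mem_univ c)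
    simp only [univ_inter] at hsplit
    have e1 : edist (γ 0) (γ c) ≤ eVariationOn γ (Icc 0 c) :=
      eVariationOn.edist_le γ (left_mem_Icc.mpr hcmem.1) (right_mem_Icc.mpr hcmem.1)
    have e2 : edist (γ c) (γ 1) ≤ eVariationOn γ (Icc c 1) :=
      eVariationOn.edist_le γ (left_mem_Icc.mpr hcmem.2) (right_mem_Icc.mpr hcmem.2)
    rw [h0, hc0] at e1
    rw [hc0, h1] at e2
    calc ENNReal.ofReal (‖x‖ + ‖y‖) = edist x 0 + edist 0 y := by
          rw [edist_dist, edist_dist, dist_zero_right, dist_zero_left,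
            ENNReal.ofReal_add (norm_nonneg _) (norm_nonneg _)]
      _ ≤ eVariationOn γ (Icc 0 c) + eVariationOn γ (Icc c 1) := add_le_add e1 e2
      _ = eVariationOn γ (Icc 0 1) := hsplit
  -- upper bound
  have hupper : ∀ x ∈ M, ∀ y ∈ M, innerDist M x y ≤ ENNReal.ofReal (‖x‖ + ‖y‖) := by
    intro x hx y hy
    exact innerDist_through_zero (fun c hc => smul_mem_coneOver hx hc)
      (fun c hc => smul_mem_coneOver hy hc)
  constructor
  · -- LNE of the union
    intro x hx y hy
    obtain ⟨i, hxi⟩ := hmemM x hx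
    obtain ⟨j, hyj⟩ := hmemM y hy
    have same : ∀ l : Fin r, x ∈ coneOver (L l) → y ∈ coneOver (L l) →
        innerDist M x y ≤ ENNReal.ofReal (max C (4 / δ) * ‖x - y‖) := by
      intro l hxl hyl
      refine le_trans (le_trans (innerDist_mono (hsubM l) x y) (hM l x hxl y hyl))
        (ENNReal.ofReal_le_ofReal ?_)
      exact mul_le_mul_of_nonneg_right (le_max_left _ _) (norm_nonneg _)
    by_cases hx0 : x = 0
    · refine same j ?_ hyj
      obtain ⟨b, hbL, t, ht, -⟩ := hyj
      exact ⟨b, hbL, 0, le_refl 0, by rw [hx0, zero_smul]⟩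
    by_cases hy0 : y = 0
    · refine same i hxi ?_
      obtain ⟨a, haL, t, ht, -⟩ := hxi
      exact ⟨a, haL, 0, le_refl 0, by rw [hy0, zero_smul]⟩
    by_cases hij : i = j
    · exact same j (hij ▸ hxi) hyj
    · have hsep2 := hsep' i j hij x hxi hx0 y hyj hy0
      have hnorm_le : ‖x‖ + ‖y‖ ≤ 4 / δ * ‖x - y‖ := by
        calc ‖x‖ + ‖y‖ = 4 / δ * (δ / 4 * (‖x‖ + ‖y‖)) := by field_simp
          _ ≤ 4 / δ * ‖x - y‖ := by
              apply mul_le_mul_of_nonneg_left hsep2; positivity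
      calc innerDist M x y ≤ ENNReal.ofReal (‖x‖ + ‖y‖) := hupper x hx y hy
        _ ≤ ENNReal.ofReal (max C (4 / δ) * ‖x - y‖) := by
            apply ENNReal.ofReal_le_ofReal
            exact le_trans hnorm_le
              (mul_le_mul_of_nonneg_right (le_max_right _ _) (norm_nonneg _))
  · intro i j hij x hx y hy
    have hx0 : x ≠ 0 := by simpa using hx.2
    have hy0 : y ≠ 0 := by simpa using hy.2
    refine ⟨le_antisymm (hupper x (hsubM i hx.1) y (hsubM j hy.1))
      (hlower i j hij x hx.1 hx0 y hy.1 hy0), hsep' i j hij x hx.1 hx0 y hy.1 hy0⟩
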